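/- Let (X, 𝒳) be a measurable space, let Y be a Polish space equipped with its Borel σ-algebra, and let n ≥ 1. Let M : X → Set Y be such that M(x) is a finite set with exactly n elements for every x ∈ X, and such that {x ∈ X : M(x) ∩ U ≠ ∅} ∈ 𝒳 for every open set U ⊆ Y. Then there exist measurable functions s₁, …, sₙ : X → Y such that for every x ∈ X, the values s₁(x), …, sₙ(x) are pairwise distinct and M(x) = {s₁(x), …, sₙ(x)}. -/

import Mathlib

set_option linter.unusedSectionVars false

open MeasureTheory Set TopologicalSpace

section Sel

variable {X Y : Type*} [MeasurableSpace X] [TopologicalSpace Y] [PolishSpace Y]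
    [MeasurableSpace Y] [BorelSpace Y]

/-- An enumeration of a countable basis of `Y` (padded with `∅`). -/
noncomputable def enumBasis (Y : Type*) [TopologicalSpace Y] [PolishSpace Y] : ℕ → Set Y :=
  ((countable_countableBasis Y).insert ∅).exists_eq_range
    (insert_nonempty _ _) |>.choose

lemma range_enumBasis (Y : Type*) [TopologicalSpace Y] [PolishSpace Y] :
    range (enumBasis Y) = insert ∅ (countableBasis Y) :=
  (((countable_countableBasis Y).insert ∅).exists_eq_range (insert_nonempty _ _)).choose_spec.symm

lemma isOpen_enumBasis (k : ℕ) : IsOpen (enumBasis Y k) := by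
  have : enumBasis Y k ∈ insert ∅ (countableBasis Y) := by
    rw [← range_enumBasis]; exact mem_range_self k
  rcases this with h | h
  · simp [h]
  · exact isOpen_of_mem_countableBasis h

lemma exists_enumBasis_subset {U : Set Y} (hU : IsOpen U) {y : Y} (hy : y ∈ U) :
    ∃ k, y ∈ enumBasis Y k ∧ enumBasis Y k ⊆ U := by
  obtain ⟨V, hV, hyV, hVU⟩ :=
    (isBasis_countableBasis Y).exists_subset_of_mem_open hy hU
  have : V ∈ range (enumBasis Y) := by rw [range_enumBasis]; exact mem_insert_of_mem _ hV
  obtain ⟨k, rfl⟩ := this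
  exact ⟨k, hyV, hVU⟩

lemma exists_enumBasis_closure_subset {U : Set Y} (hU : IsOpen U) {y : Y} (hy : y ∈ U) :
    ∃ k, y ∈ enumBasis Y k ∧ closure (enumBasis Y k) ⊆ U := by
  letI := upgradeIsCompletelyMetrizable Y
  obtain ⟨V, hV, hyV, hVU⟩ :=
    (isBasis_countableBasis Y).exists_closure_subset (hU.mem_nhds hy)
  have : V ∈ range (enumBasis Y) := by rw [range_enumBasis]; exact mem_insert_of_mem _ hV
  obtain ⟨k, rfl⟩ := this
  exact ⟨k, hyV, hVU⟩

variable (M : X → Set Y)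

open Classical in
/-- Greedy refinement of `M` along the basis. -/
noncomputable def refine : ℕ → X → Set Y
  | 0 => M
  | k + 1 => fun x =>
      if (refine k x ∩ enumBasis Y k).Nonempty then refine k x ∩ enumBasis Y k
      else refine k x

open Classical in
lemma refine_succ (k : ℕ) (x : X) :
    refine M (k + 1) x =
      if (refine M k x ∩ enumBasis Y k).Nonempty then refine M k x ∩ enumBasis Y k
      else refine M k x := rfl

lemma refine_subset (k : ℕ) (x : X) : refine M k x ⊆ M x := by
  induction k with
  | zero => exact subset_rfl
  | succ k ih =>
      rw [refine_succ]
      split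
      · exact (inter_subset_left).trans ih
      · exact ih

lemma refine_antitone {k l : ℕ} (h : k ≤ l) (x : X) : refine M l x ⊆ refine M k x := by
  induction l with
  | zero => simpa [Nat.le_zero.mp h] using subset_rfl
  | succ l ih =>
      rcases Nat.lt_or_ge k (l+1) with hk | hk
      · have hs : refine M (l+1) x ⊆ refine M l x := by
          simp only [refine]; split
          · exact inter_subset_left
          · exact subset_rfl
        exact hs.trans (ih (Nat.lt_succ_iff.mp hk))
      · have : k = l + 1 := le_antisymm h hk
        subst this; exact subset_rfl

lemma refine_nonempty (hne : ∀ x, (M x).Nonempty) (k : ℕ) (x : X) :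
    (refine M k x).Nonempty := by
  induction k with
  | zero => exact hne x
  | succ k ih =>
      rw [refine_succ]
      split
      · assumption
      · exact ih

lemma refine_meas (hmeas : ∀ U : Set Y, IsOpen U → MeasurableSet {x | (M x ∩ U).Nonempty})
    (k : ℕ) : ∀ U : Set Y, IsOpen U → MeasurableSet {x | (refine M k x ∩ U).Nonempty} := by
  induction k with
  | zero => exact hmeas
  | succ k ih =>
      intro U hU
      have : {x | (refine M (k+1) x ∩ U).Nonempty} =
          ({x | (refine M k x ∩ enumBasis Y k).Nonempty} ∩
            {x | (refine M k x ∩ (enumBasis Y k ∩ U)).Nonempty}) ∪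
          ({x | (refine M k x ∩ enumBasis Y k).Nonempty}ᶜ ∩
            {x | (refine M k x ∩ U).Nonempty}) := by
        ext x
        rw [mem_setOf_eq, refine_succ]
        by_cases h : (refine M k x ∩ enumBasis Y k).Nonempty <;>
          simp [h, inter_assoc]
      rw [this]
      exact ((ih _ (isOpen_enumBasis k)).inter
          (ih _ ((isOpen_enumBasis k).inter hU))).union
        (((ih _ (isOpen_enumBasis k)).compl).inter (ih U hU))

lemma refine_iInter_nonempty (hfin : ∀ x, (M x).Finite) (hne : ∀ x, (M x).Nonempty)
    (x : X) : (⋂ k, refine M k x).Nonempty := by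
  by_contra h
  have hx : ∀ y : Y, ∃ k, y ∉ refine M k x := by
    intro y
    by_contra hy
    push_neg at hy
    exact h ⟨y, mem_iInter.mpr hy⟩
  choose f hf using hx
  obtain ⟨K, hK⟩ := ((hfin x).image f).bddAbove
  obtain ⟨y, hy⟩ := refine_nonempty M hne K x
  have hyM : y ∈ M x := refine_subset M K x hy
  have hfy : f y ≤ K := hK (mem_image_of_mem f hyM)
  exact hf y (refine_antitone M hfy x hy)

/-- The greedy measurable selection. -/
noncomputable def sel (hfin : ∀ x, (M x).Finite) (hne : ∀ x, (M x).Nonempty) : X → Y :=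
  fun x => (refine_iInter_nonempty M hfin hne x).choose

lemma sel_mem_refine (hfin : ∀ x, (M x).Finite) (hne : ∀ x, (M x).Nonempty) (k : ℕ) (x : X) :
    sel M hfin hne x ∈ refine M k x := by
  have := (refine_iInter_nonempty M hfin hne x).choose_spec
  exact mem_iInter.mp this k

lemma sel_mem (hfin : ∀ x, (M x).Finite) (hne : ∀ x, (M x).Nonempty) (x : X) :
    sel M hfin hne x ∈ M x :=
  sel_mem_refine M hfin hne 0 x

lemma sel_mem_basis_iff (hfin : ∀ x, (M x).Finite) (hne : ∀ x, (M x).Nonempty) (k : ℕ) (x : X) :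
    sel M hfin hne x ∈ enumBasis Y k ↔ (refine M k x ∩ enumBasis Y k).Nonempty := by
  constructor
  · intro h
    exact ⟨sel M hfin hne x, sel_mem_refine M hfin hne k x, h⟩
  · intro h
    have : sel M hfin hne x ∈ refine M (k+1) x := sel_mem_refine M hfin hne (k+1) x
    rw [refine_succ, if_pos h] at this
    exact this.2

lemma sel_measurable (hfin : ∀ x, (M x).Finite) (hne : ∀ x, (M x).Nonempty)
    (hmeas : ∀ U : Set Y, IsOpen U → MeasurableSet {x | (M x ∩ U).Nonempty}) :
    Measurable (sel M hfin hne) := by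
  apply measurable_of_isOpen
  intro U hU
  have : sel M hfin hne ⁻¹' U =
      ⋃ k, ⋃ (_ : enumBasis Y k ⊆ U), {x | (refine M k x ∩ enumBasis Y k).Nonempty} := by
    ext x
    simp only [mem_preimage, mem_iUnion, mem_setOf_eq]
    constructor
    · intro hx
      obtain ⟨k, hk1, hk2⟩ := exists_enumBasis_subset hU hx
      exact ⟨k, hk2, (sel_mem_basis_iff M hfin hne k x).mp hk1⟩
    · rintro ⟨k, hk, hx⟩
      exact hk ((sel_mem_basis_iff M hfin hne k x).mpr hx)
  rw [this]
  exact MeasurableSet.iUnion fun k => MeasurableSet.iUnion fun hk =>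
    refine_meas M hmeas k _ (isOpen_enumBasis k)

lemma diff_meas (hmeas : ∀ U : Set Y, IsOpen U → MeasurableSet {x | (M x ∩ U).Nonempty})
    {s : X → Y} (hs : Measurable s) :
    ∀ U : Set Y, IsOpen U → MeasurableSet {x | ((M x \ {s x}) ∩ U).Nonempty} := by
  intro U hU
  have : {x | ((M x \ {s x}) ∩ U).Nonempty} =
      ⋃ k, ⋃ (_ : closure (enumBasis Y k) ⊆ U),
        ({x | (M x ∩ enumBasis Y k).Nonempty} ∩ {x | s x ∉ closure (enumBasis Y k)}) := by
    ext x
    simp only [mem_setOf_eq, mem_iUnion, mem_inter_iff]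
    constructor
    · rintro ⟨y, ⟨hyM, hys⟩, hyU⟩
      have hys' : y ∈ U \ {s x} := ⟨hyU, hys⟩
      obtain ⟨k, hk1, hk2⟩ := exists_enumBasis_closure_subset (hU.sdiff isClosed_singleton) hys'
      refine ⟨k, fun z hz => (hk2 hz).1, ⟨y, hyM, hk1⟩, fun hc => (hk2 hc).2 rfl⟩
    · rintro ⟨k, hkU, ⟨y, hyM, hyk⟩, hsk⟩
      refine ⟨y, ⟨hyM, fun hc => hsk ?_⟩, hkU (subset_closure hyk)⟩
      rw [mem_singleton_iff] at hc
      rw [← hc]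
      exact subset_closure hyk
  rw [this]
  exact MeasurableSet.iUnion fun k => MeasurableSet.iUnion fun hk =>
    (hmeas _ (isOpen_enumBasis k)).inter
      ((hs (isClosed_closure.measurableSet)).compl)

end Sel

section Main

variable {X Y : Type*} [MeasurableSpace X] [TopologicalSpace Y] [PolishSpace Y]
    [MeasurableSpace Y] [BorelSpace Y]

lemma enum_aux : ∀ (n : ℕ) (M : X → Set Y), (∀ x, (M x).Finite) →
    (∀ x, (M x).ncard = n + 1) →
    (∀ U : Set Y, IsOpen U → MeasurableSet {x | (M x ∩ U).Nonempty}) →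
    ∃ s : Fin (n + 1) → X → Y,
      (∀ i, Measurable (s i)) ∧
      ∀ x : X, (Function.Injective fun i => s i x) ∧
        M x = Set.range (fun i => s i x) := by
  intro n
  induction n with
  | zero =>
      intro M hfin hcard hmeas
      have hne : ∀ x, (M x).Nonempty := fun x =>
        Set.nonempty_of_ncard_ne_zero (by rw [hcard x]; omega)
      refine ⟨fun _ => sel M hfin hne, fun i => sel_measurable M hfin hne hmeas, fun x => ?_⟩
      obtain ⟨a, ha⟩ := Set.ncard_eq_one.mp (hcard x)
      have hsa : sel M hfin hne x = a := by
        have := sel_mem M hfin hne x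
        rw [ha] at this; exact this
      constructor
      · intro i j _
        have hi := i.isLt
        have hj := j.isLt
        exact Fin.ext (by omega)
      · rw [ha]
        ext y
        simp [hsa, eq_comm]
  | succ n ih =>
      intro M hfin hcard hmeas
      have hne : ∀ x, (M x).Nonempty := fun x =>
        Set.nonempty_of_ncard_ne_zero (by rw [hcard x]; omega)
      set s₀ : X → Y := sel M hfin hne with hs₀
      have hs₀meas : Measurable s₀ := sel_measurable M hfin hne hmeas
      set M' : X → Set Y := fun x => M x \ {s₀ x} with hM'
      have hfin' : ∀ x, (M' x).Finite := fun x => (hfin x).diff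
      have hcard' : ∀ x, (M' x).ncard = n + 1 := by
        intro x
        have := Set.ncard_diff_singleton_of_mem (sel_mem M hfin hne x)
        rw [hM']; simp only []
        rw [this, hcard x]
        omega
      have hmeas' : ∀ U : Set Y, IsOpen U → MeasurableSet {x | (M' x ∩ U).Nonempty} :=
        diff_meas M hmeas hs₀meas
      obtain ⟨s', hs'meas, hs'⟩ := ih M' hfin' hcard' hmeas'
      set s : Fin (n + 2) → X → Y := Fin.cons s₀ s' with hs
      have hzero : ∀ x, s 0 x = s₀ x := fun x => by rw [hs, Fin.cons_zero]
      have hsucc : ∀ (j : Fin (n + 1)) (x : X), s j.succ x = s' j x := fun j x => by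
        rw [hs, Fin.cons_succ]
      refine ⟨s, ?_, ?_⟩
      · intro i
        rcases Fin.eq_zero_or_eq_succ i with rfl | ⟨j, rfl⟩
        · have : s 0 = s₀ := funext hzero
          rw [this]; exact hs₀meas
        · have : s j.succ = s' j := funext (hsucc j)
          rw [this]; exact hs'meas j
      · intro x
        obtain ⟨hinj, hrange⟩ := hs' x
        have hmem' : ∀ i, s' i x ∈ M' x := by
          intro i
          rw [hrange]; exact Set.mem_range_self i
        have hne0 : ∀ i, s' i x ≠ s₀ x := fun i => (hmem' i).2
        constructor
        · intro i j hij
          simp only at hij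
          rcases Fin.eq_zero_or_eq_succ i with rfl | ⟨i', rfl⟩ <;>
            rcases Fin.eq_zero_or_eq_succ j with rfl | ⟨j', rfl⟩
          · rfl
          · rw [hzero, hsucc] at hij
            exact absurd hij.symm (hne0 j')
          · rw [hzero, hsucc] at hij
            exact absurd hij (hne0 i')
          · rw [hsucc, hsucc] at hij
            exact congrArg Fin.succ (hinj hij)
        · have heq : (fun i => s i x) = Fin.cons (s₀ x) (fun i => s' i x) := by
            funext i
            rcases Fin.eq_zero_or_eq_succ i with rfl | ⟨j, rfl⟩
            · rw [hzero, Fin.cons_zero]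
            · rw [hsucc, Fin.cons_succ]
          rw [heq, Fin.range_cons, ← hrange]
          have hs₀mem : s₀ x ∈ M x := sel_mem M hfin hne x
          rw [hM']
          simp only []
          rw [Set.insert_diff_singleton, Set.insert_eq_of_mem hs₀mem]

end Main

open MeasureTheory

/-- A measurable multifunction `M : X ⇉ Y` into a Polish space (with its Borel
σ-algebra) whose values all have exactly `n ≥ 1` elements can be decomposed into `n`
measurable selections that enumerate it without repetition. -/
theorem exists_measurable_enumeration_of_finite_multifunction {X Y : Type*}
    [MeasurableSpace X] [TopologicalSpace Y] [PolishSpace Y]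
    [MeasurableSpace Y] [BorelSpace Y]
    (n : ℕ) (hn : 1 ≤ n) (M : X → Set Y)
    (hfin : ∀ x, (M x).Finite) (hcard : ∀ x, (M x).ncard = n)
    (hmeas : ∀ U : Set Y, IsOpen U → MeasurableSet {x | (M x ∩ U).Nonempty}) :
    ∃ s : Fin n → X → Y,
      (∀ i, Measurable (s i)) ∧
      ∀ x : X, (Function.Injective fun i => s i x) ∧
        M x = Set.range (fun i => s i x) := by
  obtain ⟨m, rfl⟩ : ∃ m, n = m + 1 := ⟨n - 1, by omega⟩
  exact enum_aux m M hfin hcard hmeas
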